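/- Let G be a finite group. The large Davenport constant D(G), defined as the supremum of lengths of minimal product-one sequences over G, satisfies D(G) ≤ |G|. -/
import Mathlib


/-- A multiset `S` over a group `G` is *product-one* if its terms admit an
ordering whose product is `1`. -/
def IsProductOne {G : Type*} [Group G] (S : Multiset G) : Prop :=
  ∃ l : List G, (l : Multiset G) = S ∧ l.prod = 1

/-- A multiset `S` is a *minimal product-one sequence* (an atom) if it is a
nontrivial product-one sequence which cannot be partitioned into two
nontrivial product-one sub-multisets. -/
def IsMinimalProductOne {G : Type*} [Group G] (S : Multiset G) : Prop :=
  S ≠ 0 ∧ IsProductOne S ∧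
    ¬ ∃ T₁ T₂ : Multiset G, T₁ ≠ 0 ∧ T₂ ≠ 0 ∧ S = T₁ + T₂ ∧
      IsProductOne T₁ ∧ IsProductOne T₂

/-- `prodSet S` is the set `π(S)` of all products of the terms of `S` over
all orderings. -/
def prodSet {G : Type*} [Group G] (S : Multiset G) : Set G :=
  {g | ∃ l : List G, (l : Multiset G) = S ∧ l.prod = g}

/-- `vcount K S` is the number of terms of `S` lying in the set `K`. -/
noncomputable def vcount {G : Type*} (K : Set G) (S : Multiset G) : ℕ :=
  letI := Classical.decPred fun g => g ∈ K
  Multiset.card (S.filter fun g => g ∈ K)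

/-- Key splitting lemma: if a list of length `> Nat.card G` has product one,
it splits into two nonempty pieces (as multisets) each with product one. -/
lemma exists_split {G : Type*} [Group G] [Finite G] (l : List G)
    (hprod : l.prod = 1) (hlen : Nat.card G < l.length) :
    ∃ T₁ T₂ : Multiset G, T₁ ≠ 0 ∧ T₂ ≠ 0 ∧ (l : Multiset G) = T₁ + T₂ ∧
      IsProductOne T₁ ∧ IsProductOne T₂ := by
  have hninj : ¬ Function.Injective
      (fun k : Fin l.length => (l.take (k + 1)).prod) := by
    intro hinj
    have := Nat.card_le_card_of_injective _ hinj
    simp [Nat.card_eq_fintype_card] at this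
    omega
  rw [Function.not_injective_iff] at hninj
  obtain ⟨i, j, hfij, hij⟩ := hninj
  -- WLOG i < j
  wlog hlt : (i : ℕ) < (j : ℕ) generalizing i j
  · exact this j i hfij.symm hij.symm (by
      rcases lt_or_gt_of_ne (fun h : (i : ℕ) = (j : ℕ) => hij (Fin.ext h)) with h | h
      · exact absurd h hlt
      · exact h)
  set a := l.take (i + 1) with ha
  set b := (l.drop (i + 1)).take (j - i) with hb
  set c := l.drop (j + 1) with hc
  have h1 : a ++ b = l.take (j + 1) := by
    rw [ha, hb, ← List.take_add]
    congr 1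
    omega
  have h2 : (a ++ b) ++ c = l := by
    rw [h1, hc, List.take_append_drop]
  have hfi : (l.take ((i : ℕ) + 1)).prod = (l.take ((j : ℕ) + 1)).prod := hfij
  have hbprod : b.prod = 1 := by
    have : a.prod * b.prod = a.prod * 1 := by
      rw [mul_one, ← List.prod_append, h1, ← hfi]
    exact mul_left_cancel this
  have hacprod : (a ++ c).prod = 1 := by
    have := hprod
    rw [← h2, List.prod_append, List.prod_append, hbprod, mul_one,
      ← List.prod_append] at this
    exact this
  have hbne : b ≠ [] := by
    have : b.length = j - i := by
      rw [hb, List.length_take, List.length_drop]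
      have := j.isLt
      omega
    intro h
    rw [h] at this
    simp at this
    omega
  have hane : a ≠ [] := by
    have : a.length = i + 1 := by
      rw [ha, List.length_take]
      have := i.isLt
      omega
    intro h
    rw [h] at this
    simp at this
  refine ⟨(b : Multiset G), ((a ++ c : List G) : Multiset G), ?_, ?_, ?_, ?_, ?_⟩
  · simpa using hbne
  · simp [hane]
  · rw [← h2]
    simp only [← Multiset.coe_add]
    abel
  · exact ⟨b, rfl, hbprod⟩
  · exact ⟨a ++ c, rfl, hacprod⟩

theorem stmt5 {G : Type*} [Group G] [Finite G] (S : Multiset G)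
    (hS : IsMinimalProductOne S) : Multiset.card S ≤ Nat.card G := by
  by_contra h
  push_neg at h
  obtain ⟨hne, ⟨l, hl, hprod⟩, hmin⟩ := hS
  apply hmin
  have hlen : Nat.card G < l.length := by
    rw [← Multiset.coe_card, hl]
    exact h
  obtain ⟨T₁, T₂, h1, h2, h3, h4, h5⟩ := exists_split l hprod hlen
  exact ⟨T₁, T₂, h1, h2, by rw [← hl, h3], h4, h5⟩
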